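/- Let P(r,s|a,b) be a nonsignaling box with V(P) nonempty and D(P) = sup over probability distributions ρ(a) of inf over ρ(r,𝐬|a)∈V(P) of the mutual information I(A;𝐒) of the channel ρ(𝐬|a)=Σ_r ρ(r,𝐬|a) with input ρ(a). Suppose λ*(r,s,a,b) and a strictly positive probability distribution ρ*(a) satisfy the dual constraint Σ_a ρ*(a) max_r exp(Σ_b λ*(r,s_b,a,b)) ≤ 1 for all 𝐬∈𝓢^B, together with Σ_{r,s,a,b} P(r,s|a,b)ρ*(a)λ*(r,s,a,b) = D(P). Define the Bell coefficients B(r,s;a,b) = ρ*(a)λ*(r,s,a,b), L = max_{𝐫,𝐬} Σ_{a,b} B(r_a,s_b;a,b), and ΔB = Σ_{r,s,a,b} P(r,s|a,b)B(r,s;a,b) − L. Then sup over strictly positive η(a) of [ (ΔB+L)/γ + K_η ] = D(P), where γ = Σ_a η(a), ρ(a) = η(a)/γ, and K_η = −log max_{𝐬} Σ_a ρ(a) max_r exp( η(a)^{−1} Σ_b B(r,s_b;a,b) ). -/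

import Mathlib

open scoped BigOperators

/-- A probability distribution on a finite type. -/
def IsDist {α : Type*} [Fintype α] (q : α → ℝ) : Prop :=
  (∀ x, 0 ≤ q x) ∧ ∑ x, q x = 1

/-- Mutual information of the channel `W` with input distribution `q`
(convention `0 · log 0 = 0`, automatic since `Real.log 0 = 0`). -/
noncomputable def mutInfo {X Y : Type*} [Fintype X] [Fintype Y]
    (W : Y → X → ℝ) (q : X → ℝ) : ℝ :=
  ∑ y, ∑ x, W y x * q x * Real.log (W y x / ∑ x', W y x' * q x')

/-- A nonsignaling box `P(r,s|a,b)`. -/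
def IsNSBox {R S : Type*} [Fintype R] [Fintype S] {A B : ℕ}
    (P : R → S → Fin A → Fin B → ℝ) : Prop :=
  (∀ r s a b, 0 ≤ P r s a b) ∧
  (∀ a b, ∑ r, ∑ s, P r s a b = 1) ∧
  (∀ a r b b', ∑ s, P r s a b = ∑ s, P r s a b') ∧
  (∀ b s a a', ∑ r, P r s a b = ∑ r, P r s a' b)

/-- Membership in the set `V(P)`: `ρ(r,𝐬|a)` is a conditional probability over
`r` and sequences `𝐬 ∈ 𝓢^B` whose marginal on `(r, s_b)` is `P(r,s|a,b)`. -/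
def MemV {R S : Type*} [Fintype R] [Fintype S] [DecidableEq S] {A B : ℕ}
    (P : R → S → Fin A → Fin B → ℝ)
    (ρ : R → (Fin B → S) → Fin A → ℝ) : Prop :=
  (∀ r ss a, 0 ≤ ρ r ss a) ∧
  (∀ a, ∑ r, ∑ ss : Fin B → S, ρ r ss a = 1) ∧
  (∀ a b r s, ∑ ss : Fin B → S, (if ss b = s then ρ r ss a else 0) = P r s a b)


/-- `D(P) = sup_{ρ(a)} inf_{ρ(r,𝐬|a) ∈ V(P)} I(A;𝐒)`. -/
noncomputable def DP {R S : Type*} [Fintype R] [Fintype S] [DecidableEq S]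
    {A B : ℕ} (P : R → S → Fin A → Fin B → ℝ) : ℝ :=
  sSup { d : ℝ | ∃ q : Fin A → ℝ, IsDist q ∧
    d = sInf { x : ℝ | ∃ ρ, MemV P ρ ∧
          x = mutInfo (fun ss a => ∑ r, ρ r ss a) q } }

lemma log_le_div_exp {x : ℝ} (hx : 0 < x) : Real.log x ≤ x / Real.exp 1 := by
  have h := Real.log_le_sub_one_of_pos (x := x / Real.exp 1) (by positivity)
  rw [Real.log_div hx.ne' (Real.exp_ne_zero 1), Real.log_exp] at h
  linarith

lemma key_duality {R S : Type*} [Fintype R] [Fintype S] [DecidableEq S] {A B : ℕ}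
    {P : R → S → Fin A → Fin B → ℝ}
    {ρV : R → (Fin B → S) → Fin A → ℝ} (hρ : MemV P ρV)
    {q : Fin A → ℝ} (hq : IsDist q)
    (g : (Fin B → S) → Fin A → ℝ)
    (hg : ∀ ss, ∑ a, q a * Real.exp (g ss a) ≤ 1) :
    ∑ ss : Fin B → S, ∑ a, (∑ r, ρV r ss a) * q a * g ss a
      ≤ mutInfo (fun ss a => ∑ r, ρV r ss a) q := by
  set W : (Fin B → S) → Fin A → ℝ := fun ss a => ∑ r, ρV r ss a with hW
  have hWnn : ∀ ss a, 0 ≤ W ss a := fun ss a =>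
    Finset.sum_nonneg fun r _ => hρ.1 r ss a
  have hWsum : ∀ a, ∑ ss, W ss a = 1 := by
    intro a; rw [← hρ.2.1 a, Finset.sum_comm]
  set D : (Fin B → S) → ℝ := fun ss => ∑ a', W ss a' * q a' with hD
  have hDnn : ∀ ss, 0 ≤ D ss :=
    fun ss => Finset.sum_nonneg fun a _ => mul_nonneg (hWnn _ _) (hq.1 a)
  have hDsum : ∑ ss, D ss = 1 := by
    calc ∑ ss, ∑ a', W ss a' * q a' = ∑ a', (∑ ss, W ss a') * q a' := by
          rw [Finset.sum_comm]; simp_rw [Finset.sum_mul]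
      _ = 1 := by simp_rw [hWsum, one_mul]; exact hq.2
  have hWqsum : ∑ ss, ∑ a, W ss a * q a = 1 := hDsum
  have pt : ∀ ss a, W ss a * q a * g ss a - W ss a * q a * Real.log (W ss a / D ss)
      ≤ q a * Real.exp (g ss a) * D ss - W ss a * q a := by
    intro ss a
    rcases (mul_nonneg (hWnn ss a) (hq.1 a)).lt_or_eq with h | h
    · have hWpos : 0 < W ss a := by
        rcases (hWnn ss a).lt_or_eq with h' | h'
        · exact h'
        · exfalso; rw [← h'] at h; simp at h
      have hqa : 0 < q a := by
        rcases (hq.1 a).lt_or_eq with h' | h'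
        · exact h'
        · exfalso; rw [← h'] at h; simp at h
      have hDpos : 0 < D ss := lt_of_lt_of_le h
        (Finset.single_le_sum (f := fun a' => W ss a' * q a')
          (fun a' _ => mul_nonneg (hWnn ss a') (hq.1 a')) (Finset.mem_univ a))
      have hlog : g ss a - Real.log (W ss a / D ss)
          = Real.log (Real.exp (g ss a) * (D ss / W ss a)) := by
        rw [Real.log_mul (Real.exp_ne_zero _) (by positivity), Real.log_exp,
          Real.log_div hDpos.ne' hWpos.ne', Real.log_div hWpos.ne' hDpos.ne']
        ring
      have hle : Real.log (Real.exp (g ss a) * (D ss / W ss a))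
          ≤ Real.exp (g ss a) * (D ss / W ss a) - 1 :=
        Real.log_le_sub_one_of_pos (by positivity)
      calc W ss a * q a * g ss a - W ss a * q a * Real.log (W ss a / D ss)
          = (W ss a * q a) * (g ss a - Real.log (W ss a / D ss)) := by ring
        _ = (W ss a * q a) * Real.log (Real.exp (g ss a) * (D ss / W ss a)) := by
            rw [hlog]
        _ ≤ (W ss a * q a) * (Real.exp (g ss a) * (D ss / W ss a) - 1) :=
            mul_le_mul_of_nonneg_left hle h.le
        _ = q a * Real.exp (g ss a) * D ss - W ss a * q a := by
            field_simp
    · rw [← h]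
      have h0 : (0:ℝ) ≤ q a * Real.exp (g ss a) * D ss :=
        mul_nonneg (mul_nonneg (hq.1 a) (Real.exp_pos _).le) (hDnn ss)
      simpa [← h] using h0
  have hsum : ∑ ss, ∑ a, (W ss a * q a * g ss a - W ss a * q a * Real.log (W ss a / D ss))
      ≤ ∑ ss, ∑ a, (q a * Real.exp (g ss a) * D ss - W ss a * q a) :=
    Finset.sum_le_sum fun ss _ => Finset.sum_le_sum fun a _ => pt ss a
  have hrhs : ∑ ss, ∑ a, (q a * Real.exp (g ss a) * D ss - W ss a * q a) ≤ 0 := by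
    have h1 : ∑ ss, ∑ a, q a * Real.exp (g ss a) * D ss ≤ 1 := by
      calc ∑ ss, ∑ a, q a * Real.exp (g ss a) * D ss
          = ∑ ss, (∑ a, q a * Real.exp (g ss a)) * D ss := by
            simp_rw [Finset.sum_mul]
        _ ≤ ∑ ss, 1 * D ss :=
            Finset.sum_le_sum fun ss _ =>
              mul_le_mul_of_nonneg_right (hg ss) (hDnn ss)
        _ = 1 := by simp_rw [one_mul]; exact hDsum
    have : ∑ ss, ∑ a, (q a * Real.exp (g ss a) * D ss - W ss a * q a)
        = (∑ ss, ∑ a, q a * Real.exp (g ss a) * D ss) - ∑ ss, ∑ a, W ss a * q a := by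
      simp_rw [Finset.sum_sub_distrib]
    rw [this, hWqsum]; linarith
  have hfinal : ∑ ss, ∑ a, W ss a * q a * g ss a
      - ∑ ss, ∑ a, W ss a * q a * Real.log (W ss a / D ss) ≤ 0 := by
    have : ∑ ss, ∑ a, (W ss a * q a * g ss a - W ss a * q a * Real.log (W ss a / D ss))
        = ∑ ss, ∑ a, W ss a * q a * g ss a
          - ∑ ss, ∑ a, W ss a * q a * Real.log (W ss a / D ss) := by
      simp_rw [Finset.sum_sub_distrib]
    linarith [this ▸ le_trans hsum hrhs]
  have hmut : mutInfo W q = ∑ ss, ∑ a, W ss a * q a * Real.log (W ss a / D ss) := rfl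
  rw [hmut]
  linarith

lemma mutInfo_le_card {R S : Type*} [Fintype R] [Fintype S] [DecidableEq S] {A B : ℕ}
    {P : R → S → Fin A → Fin B → ℝ}
    {ρV : R → (Fin B → S) → Fin A → ℝ} (hρ : MemV P ρV)
    {q : Fin A → ℝ} (hq : IsDist q) :
    mutInfo (fun ss a => ∑ r, ρV r ss a) q ≤ (A : ℝ) / Real.exp 1 := by
  set W : (Fin B → S) → Fin A → ℝ := fun ss a => ∑ r, ρV r ss a with hW
  have hWnn : ∀ ss a, 0 ≤ W ss a := fun ss a =>
    Finset.sum_nonneg fun r _ => hρ.1 r ss a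
  have hWsum : ∀ a, ∑ ss, W ss a = 1 := by
    intro a; rw [← hρ.2.1 a, Finset.sum_comm]
  set D : (Fin B → S) → ℝ := fun ss => ∑ a', W ss a' * q a' with hD
  have pt : ∀ ss a, W ss a * q a * Real.log (W ss a / D ss) ≤ W ss a / Real.exp 1 := by
    intro ss a
    rcases (mul_nonneg (hWnn ss a) (hq.1 a)).lt_or_eq with h | h
    · have hWpos : 0 < W ss a := by
        rcases (hWnn ss a).lt_or_eq with h' | h'
        · exact h'
        · exfalso; rw [← h'] at h; simp at h
      have hqa : 0 < q a := by
        rcases (hq.1 a).lt_or_eq with h' | h'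
        · exact h'
        · exfalso; rw [← h'] at h; simp at h
      have hDpos : 0 < D ss := lt_of_lt_of_le h
        (Finset.single_le_sum (f := fun a' => W ss a' * q a')
          (fun a' _ => mul_nonneg (hWnn ss a') (hq.1 a')) (Finset.mem_univ a))
      have hDge : W ss a * q a ≤ D ss :=
        Finset.single_le_sum (f := fun a' => W ss a' * q a')
          (fun a' _ => mul_nonneg (hWnn ss a') (hq.1 a')) (Finset.mem_univ a)
      have hdiv : W ss a / D ss ≤ (q a)⁻¹ := by
        rw [div_le_iff₀ hDpos]
        calc W ss a = (q a)⁻¹ * (W ss a * q a) := by field_simp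
          _ ≤ (q a)⁻¹ * D ss := by
              exact mul_le_mul_of_nonneg_left hDge (by positivity)
      have hlogle : Real.log (W ss a / D ss) ≤ Real.log (q a)⁻¹ :=
        Real.log_le_log (by positivity) hdiv
      have h2 : Real.log (q a)⁻¹ ≤ (q a)⁻¹ / Real.exp 1 :=
        log_le_div_exp (by positivity)
      calc W ss a * q a * Real.log (W ss a / D ss)
          ≤ W ss a * q a * ((q a)⁻¹ / Real.exp 1) :=
            mul_le_mul_of_nonneg_left (hlogle.trans h2) h.le
        _ = W ss a / Real.exp 1 := by field_simp
    · rw [← h, zero_mul]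
      exact div_nonneg (hWnn ss a) (Real.exp_pos 1).le
  calc mutInfo W q ≤ ∑ ss, ∑ a : Fin A, W ss a / Real.exp 1 :=
        Finset.sum_le_sum fun ss _ => Finset.sum_le_sum fun a _ => pt ss a
    _ = ∑ a : Fin A, (∑ ss, W ss a) / Real.exp 1 := by
        rw [Finset.sum_comm]; simp_rw [Finset.sum_div]
    _ = (A : ℝ) / Real.exp 1 := by
        simp_rw [hWsum]; simp [div_eq_mul_inv]

lemma marg_eq {R S : Type*} [Fintype R] [Fintype S] [DecidableEq S] {A B : ℕ}
    {P : R → S → Fin A → Fin B → ℝ}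
    {ρV : R → (Fin B → S) → Fin A → ℝ} (hρ : MemV P ρV)
    (r : R) (a : Fin A) (b : Fin B) (h : S → ℝ) :
    ∑ ss : Fin B → S, ρV r ss a * h (ss b) = ∑ s, P r s a b * h s := by
  calc ∑ ss : Fin B → S, ρV r ss a * h (ss b)
      = ∑ ss : Fin B → S, ∑ s, (if ss b = s then ρV r ss a * h s else 0) := by
        refine Finset.sum_congr rfl fun ss _ => ?_
        rw [Finset.sum_ite_eq Finset.univ (ss b) (fun s => ρV r ss a * h s)]
        simp
    _ = ∑ s, ∑ ss : Fin B → S, (if ss b = s then ρV r ss a * h s else 0) :=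
        Finset.sum_comm
    _ = ∑ s, (∑ ss : Fin B → S, if ss b = s then ρV r ss a else 0) * h s := by
        refine Finset.sum_congr rfl fun s _ => ?_
        rw [Finset.sum_mul]
        refine Finset.sum_congr rfl fun ss _ => ?_
        split <;> simp
    _ = ∑ s, P r s a b * h s := by simp_rw [hρ.2.2]

lemma dual_le {R S : Type*} [Fintype R] [Fintype S] [DecidableEq S]
    [Nonempty R] [Nonempty S] {A B : ℕ} [Nonempty (Fin A)]
    {P : R → S → Fin A → Fin B → ℝ}
    (Bc : R → S → Fin A → Fin B → ℝ)
    {ρV : R → (Fin B → S) → Fin A → ℝ} (hρ : MemV P ρV)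
    (η : Fin A → ℝ) (hη : ∀ a, 0 < η a) :
    (∑ r, ∑ s, ∑ a, ∑ b, P r s a b * Bc r s a b) / (∑ a, η a)
      - Real.log (⨆ ss : Fin B → S, ∑ a, (η a / ∑ a', η a') *
          ⨆ r, Real.exp ((η a)⁻¹ * ∑ b, Bc r (ss b) a b))
      ≤ mutInfo (fun ss a => ∑ r, ρV r ss a) (fun a => η a / ∑ a', η a') := by
  have hγ : 0 < ∑ a, η a := Finset.sum_pos (fun a _ => hη a) Finset.univ_nonempty
  set γ : ℝ := ∑ a, η a with hγdef
  set q : Fin A → ℝ := fun a => η a / γ with hqdef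
  have hqd : IsDist q := by
    constructor
    · intro a; exact div_nonneg (hη a).le hγ.le
    · rw [hqdef]; simp only []; rw [← Finset.sum_div]; exact div_self hγ.ne'
  set supexp : (Fin B → S) → Fin A → ℝ :=
    fun ss a => ⨆ r, Real.exp ((η a)⁻¹ * ∑ b, Bc r (ss b) a b) with hsup
  have hsuppos : ∀ ss a, 0 < supexp ss a := by
    intro ss a
    have := le_ciSup (Set.Finite.bddAbove
      (Set.finite_range (fun r => Real.exp ((η a)⁻¹ * ∑ b, Bc r (ss b) a b))))
      (Classical.arbitrary R)
    exact lt_of_lt_of_le (Real.exp_pos _) this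
  set F : (Fin B → S) → ℝ := fun ss => ∑ a, q a * supexp ss a with hF
  have hFpos : ∀ ss, 0 < F ss := by
    intro ss
    exact Finset.sum_pos (fun a _ =>
      mul_pos (div_pos (hη a) hγ) (hsuppos ss a)) Finset.univ_nonempty
  set M : ℝ := ⨆ ss, F ss with hM
  have hFleM : ∀ ss, F ss ≤ M :=
    fun ss => le_ciSup (Set.Finite.bddAbove (Set.finite_range F)) ss
  have hMpos : 0 < M := lt_of_lt_of_le (hFpos (Classical.arbitrary _)) (hFleM _)
  set g : (Fin B → S) → Fin A → ℝ :=
    fun ss a => Real.log (supexp ss a) - Real.log M with hg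
  have hexpg : ∀ ss a, Real.exp (g ss a) = supexp ss a / M := by
    intro ss a
    rw [hg]; simp only []
    rw [Real.exp_sub, Real.exp_log (hsuppos ss a), Real.exp_log hMpos]
  have hgfeas : ∀ ss, ∑ a, q a * Real.exp (g ss a) ≤ 1 := by
    intro ss
    have : ∑ a, q a * Real.exp (g ss a) = F ss / M := by
      rw [hF]; simp only []
      rw [Finset.sum_div]
      exact Finset.sum_congr rfl fun a _ => by rw [hexpg, mul_div_assoc]
    rw [this, div_le_one hMpos]
    exact hFleM ss
  have hkey := key_duality hρ hqd g hgfeas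
  set W : (Fin B → S) → Fin A → ℝ := fun ss a => ∑ r, ρV r ss a with hW
  have hWnn : ∀ ss a, 0 ≤ W ss a := fun ss a =>
    Finset.sum_nonneg fun r _ => hρ.1 r ss a
  have hWsum : ∀ a, ∑ ss, W ss a = 1 := by
    intro a; rw [← hρ.2.1 a, Finset.sum_comm]
  have hWqsum : ∑ ss, ∑ a, W ss a * q a = 1 := by
    rw [Finset.sum_comm]
    calc ∑ a, ∑ ss, W ss a * q a = ∑ a, (∑ ss, W ss a) * q a := by
          simp_rw [Finset.sum_mul]
      _ = 1 := by simp_rw [hWsum, one_mul]; exact hqd.2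
  -- expand Σ W q g
  have hexpand : ∑ ss : Fin B → S, ∑ a, W ss a * q a * g ss a
      = (∑ ss : Fin B → S, ∑ a, W ss a * q a * Real.log (supexp ss a)) - Real.log M := by
    have h1 : ∀ ss a, W ss a * q a * g ss a
        = W ss a * q a * Real.log (supexp ss a) - W ss a * q a * Real.log M := by
      intro ss a; rw [hg]; ring
    simp_rw [h1, Finset.sum_sub_distrib]
    congr 1
    calc ∑ ss, ∑ a, W ss a * q a * Real.log M
        = (∑ ss, ∑ a, W ss a * q a) * Real.log M := by
          simp_rw [Finset.sum_mul]
      _ = Real.log M := by rw [hWqsum, one_mul]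
  -- lower bound on Σ W q log supexp
  have hlb : (∑ r, ∑ s, ∑ a, ∑ b, P r s a b * Bc r s a b) / γ
      ≤ ∑ ss : Fin B → S, ∑ a, W ss a * q a * Real.log (supexp ss a) := by
    have hstep : ∀ ss a, ∑ r, ρV r ss a * (γ⁻¹ * ∑ b, Bc r (ss b) a b)
        ≤ W ss a * q a * Real.log (supexp ss a) := by
      intro ss a
      have hq_inv : q a * (η a)⁻¹ = γ⁻¹ := by
        show η a / γ * (η a)⁻¹ = γ⁻¹
        field_simp
        exact div_self (hη a).ne'
      have hterm : ∀ r, γ⁻¹ * ∑ b, Bc r (ss b) a b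
          ≤ q a * Real.log (supexp ss a) := by
        intro r
        have h1 : (η a)⁻¹ * ∑ b, Bc r (ss b) a b ≤ Real.log (supexp ss a) := by
          have h2 : Real.exp ((η a)⁻¹ * ∑ b, Bc r (ss b) a b) ≤ supexp ss a :=
            le_ciSup (f := fun r => Real.exp ((η a)⁻¹ * ∑ b, Bc r (ss b) a b))
              (Set.Finite.bddAbove (Set.finite_range _)) r
          calc (η a)⁻¹ * ∑ b, Bc r (ss b) a b
              = Real.log (Real.exp ((η a)⁻¹ * ∑ b, Bc r (ss b) a b)) := by
                rw [Real.log_exp]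
            _ ≤ Real.log (supexp ss a) := Real.log_le_log (Real.exp_pos _) h2
        calc γ⁻¹ * ∑ b, Bc r (ss b) a b
            = q a * ((η a)⁻¹ * ∑ b, Bc r (ss b) a b) := by
              rw [← mul_assoc, hq_inv]
          _ ≤ q a * Real.log (supexp ss a) :=
              mul_le_mul_of_nonneg_left h1 (hqd.1 a)
      calc ∑ r, ρV r ss a * (γ⁻¹ * ∑ b, Bc r (ss b) a b)
          ≤ ∑ r, ρV r ss a * (q a * Real.log (supexp ss a)) :=
            Finset.sum_le_sum fun r _ =>
              mul_le_mul_of_nonneg_left (hterm r) (hρ.1 r ss a)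
        _ = W ss a * q a * Real.log (supexp ss a) := by
            rw [hW]; simp only []
            rw [← Finset.sum_mul]; ring
    have hsum1 : ∑ ss : Fin B → S, ∑ a, ∑ r, ρV r ss a * (γ⁻¹ * ∑ b, Bc r (ss b) a b)
        ≤ ∑ ss : Fin B → S, ∑ a, W ss a * q a * Real.log (supexp ss a) :=
      Finset.sum_le_sum fun ss _ => Finset.sum_le_sum fun a _ => hstep ss a
    -- compute LHS = T/γ
    have hU : ∑ ss : Fin B → S, ∑ a, ∑ r, ∑ b, ρV r ss a * Bc r (ss b) a b
        = ∑ r, ∑ s, ∑ a, ∑ b, P r s a b * Bc r s a b := by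
      calc ∑ ss : Fin B → S, ∑ a, ∑ r, ∑ b, ρV r ss a * Bc r (ss b) a b
          = ∑ a, ∑ ss : Fin B → S, ∑ r, ∑ b, ρV r ss a * Bc r (ss b) a b :=
            Finset.sum_comm
        _ = ∑ a, ∑ r, ∑ ss : Fin B → S, ∑ b, ρV r ss a * Bc r (ss b) a b :=
            Finset.sum_congr rfl fun a _ => Finset.sum_comm
        _ = ∑ a, ∑ r, ∑ b, ∑ ss : Fin B → S, ρV r ss a * Bc r (ss b) a b :=
            Finset.sum_congr rfl fun a _ => Finset.sum_congr rfl fun r _ =>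
              Finset.sum_comm
        _ = ∑ a, ∑ r, ∑ b, ∑ s, P r s a b * Bc r s a b :=
            Finset.sum_congr rfl fun a _ => Finset.sum_congr rfl fun r _ =>
              Finset.sum_congr rfl fun b _ => marg_eq hρ r a b (fun s => Bc r s a b)
        _ = ∑ a, ∑ r, ∑ s, ∑ b, P r s a b * Bc r s a b :=
            Finset.sum_congr rfl fun a _ => Finset.sum_congr rfl fun r _ =>
              Finset.sum_comm
        _ = ∑ r, ∑ a, ∑ s, ∑ b, P r s a b * Bc r s a b := Finset.sum_comm
        _ = ∑ r, ∑ s, ∑ a, ∑ b, P r s a b * Bc r s a b :=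
            Finset.sum_congr rfl fun r _ => Finset.sum_comm
    have hcompute : ∑ ss : Fin B → S, ∑ a, ∑ r, ρV r ss a * (γ⁻¹ * ∑ b, Bc r (ss b) a b)
        = (∑ r, ∑ s, ∑ a, ∑ b, P r s a b * Bc r s a b) / γ := by
      rw [div_eq_inv_mul, ← hU, Finset.mul_sum]
      refine Finset.sum_congr rfl fun ss _ => ?_
      rw [Finset.mul_sum]
      refine Finset.sum_congr rfl fun a _ => ?_
      rw [Finset.mul_sum]
      refine Finset.sum_congr rfl fun r _ => ?_
      rw [Finset.mul_sum, Finset.mul_sum, Finset.mul_sum]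
      exact Finset.sum_congr rfl fun b _ => by ring
    rw [← hcompute]; exact hsum1
  have hkey' : ∑ ss : Fin B → S, ∑ a, W ss a * q a * g ss a ≤ mutInfo W q := hkey
  rw [hexpand] at hkey'
  show (∑ r, ∑ s, ∑ a, ∑ b, P r s a b * Bc r s a b) / γ - Real.log M ≤ mutInfo W q
  linarith [hlb, hkey']

lemma mutInfo_nonneg_of_memV {R S : Type*} [Fintype R] [Fintype S] [DecidableEq S]
    {A B : ℕ} {P : R → S → Fin A → Fin B → ℝ}
    {ρV : R → (Fin B → S) → Fin A → ℝ} (hρ : MemV P ρV)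
    {q : Fin A → ℝ} (hq : IsDist q) :
    0 ≤ mutInfo (fun ss a => ∑ r, ρV r ss a) q := by
  have h := key_duality hρ hq (fun _ _ => 0) (fun ss => by simp [hq.2])
  simpa using h

/-- Tightness of the Bell-violation lower bound: if `λ*` and a strictly positive
distribution `ρ*` satisfy the dual constraint and attain `D(P)` in the dual
objective, then for the Bell coefficients `B(r,s;a,b) = ρ*(a) λ*(r,s,a,b)`, with
`L = max_{𝐫,𝐬} Σ_{a,b} B(r_a,s_b;a,b)` and
`ΔB = Σ_{r,s,a,b} P(r,s|a,b) B(r,s;a,b) − L`, one has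
`sup_{η > 0} [(ΔB + L)/γ + K_η] = D(P)`. -/
theorem stmt11 {R S : Type*} [Fintype R] [Fintype S] [DecidableEq S]
    [Nonempty R] [Nonempty S] {A B : ℕ}
    (P : R → S → Fin A → Fin B → ℝ) (hP : IsNSBox P)
    (hne : ∃ ρ, MemV P ρ)
    (lam : R → S → Fin A → Fin B → ℝ)
    (qstar : Fin A → ℝ) (hq : IsDist qstar) (hqpos : ∀ a, 0 < qstar a)
    (hfeas : ∀ ss : Fin B → S,
      ∑ a, qstar a * ⨆ r, Real.exp (∑ b, lam r (ss b) a b) ≤ 1)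
    (hopt : ∑ r, ∑ s, ∑ a, ∑ b, P r s a b * qstar a * lam r s a b = DP P)
    (Bc : R → S → Fin A → Fin B → ℝ)
    (hBc : ∀ r s a b, Bc r s a b = qstar a * lam r s a b)
    (L ΔB : ℝ)
    (hL : L = ⨆ p : (Fin A → R) × (Fin B → S),
        ∑ a, ∑ b, Bc (p.1 a) (p.2 b) a b)
    (hΔ : ΔB = (∑ r, ∑ s, ∑ a, ∑ b, P r s a b * Bc r s a b) - L) :
    sSup { v : ℝ | ∃ η : Fin A → ℝ, (∀ a, 0 < η a) ∧
        v = (ΔB + L) / (∑ a, η a)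
          + (-Real.log (⨆ ss : Fin B → S,
              ∑ a, (η a / ∑ a', η a') *
                ⨆ r, Real.exp ((η a)⁻¹ * ∑ b, Bc r (ss b) a b))) }
      = DP P := by
  obtain ⟨ρ0, hρ0⟩ := hne
  have hAne : Nonempty (Fin A) := by
    rcases Nat.eq_zero_or_pos A with h | h
    · exfalso; subst h; simpa using hq.2
    · exact ⟨⟨0, h⟩⟩
  set T : ℝ := ∑ r, ∑ s, ∑ a, ∑ b, P r s a b * Bc r s a b with hT
  have hTD : T = DP P := by
    rw [hT, ← hopt]
    exact Finset.sum_congr rfl fun r _ => Finset.sum_congr rfl fun s _ =>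
      Finset.sum_congr rfl fun a _ => Finset.sum_congr rfl fun b _ => by
        rw [hBc]; ring
  have hΔL : ΔB + L = T := by rw [hΔ]; ring
  -- Step A : every element of the set is ≤ DP P
  have stepA : ∀ v ∈ { v : ℝ | ∃ η : Fin A → ℝ, (∀ a, 0 < η a) ∧
      v = (ΔB + L) / (∑ a, η a)
        + (-Real.log (⨆ ss : Fin B → S,
            ∑ a, (η a / ∑ a', η a') *
              ⨆ r, Real.exp ((η a)⁻¹ * ∑ b, Bc r (ss b) a b))) }, v ≤ DP P := by
    rintro v ⟨η, hη, rfl⟩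
    have hγ : 0 < ∑ a, η a := Finset.sum_pos (fun a _ => hη a) Finset.univ_nonempty
    set q : Fin A → ℝ := fun a => η a / ∑ a', η a' with hqdef
    have hqd : IsDist q := by
      constructor
      · intro a; exact div_nonneg (hη a).le hγ.le
      · rw [hqdef]; rw [← Finset.sum_div]; exact div_self hγ.ne'
    -- v ≤ mutInfo for every element of V
    have hvle : ∀ ρV, MemV P ρV →
        (ΔB + L) / (∑ a, η a)
          + (-Real.log (⨆ ss : Fin B → S,
              ∑ a, (η a / ∑ a', η a') *
                ⨆ r, Real.exp ((η a)⁻¹ * ∑ b, Bc r (ss b) a b)))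
        ≤ mutInfo (fun ss a => ∑ r, ρV r ss a) q := by
      intro ρV hρV
      have hthis := dual_le (P := P) Bc hρV η hη
      rw [← hT] at hthis
      rw [← hqdef] at hthis
      rw [hΔL]
      linarith [hthis]
    -- hence v ≤ sInf
    have hsinf : (ΔB + L) / (∑ a, η a)
          + (-Real.log (⨆ ss : Fin B → S,
              ∑ a, (η a / ∑ a', η a') *
                ⨆ r, Real.exp ((η a)⁻¹ * ∑ b, Bc r (ss b) a b)))
        ≤ sInf { x : ℝ | ∃ ρ, MemV P ρ ∧
            x = mutInfo (fun ss a => ∑ r, ρ r ss a) q } := by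
      refine le_csInf ⟨mutInfo (fun ss a => ∑ r, ρ0 r ss a) q, ρ0, hρ0, rfl⟩ ?_
      rintro x ⟨ρV, hρV, rfl⟩
      exact hvle ρV hρV
    refine hsinf.trans ?_
    -- sInf belongs to DP set, which is bounded above
    have hbdd : BddAbove { d : ℝ | ∃ q : Fin A → ℝ, IsDist q ∧
        d = sInf { x : ℝ | ∃ ρ, MemV P ρ ∧
            x = mutInfo (fun ss a => ∑ r, ρ r ss a) q } } := by
      refine ⟨(A : ℝ) / Real.exp 1, ?_⟩
      rintro d ⟨q', hq', rfl⟩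
      have hlow : ∀ x ∈ { x : ℝ | ∃ ρ, MemV P ρ ∧
          x = mutInfo (fun ss a => ∑ r, ρ r ss a) q' }, (0:ℝ) ≤ x := by
        rintro x ⟨ρV, hρV, rfl⟩
        exact mutInfo_nonneg_of_memV hρV hq'
      have h1 : sInf { x : ℝ | ∃ ρ, MemV P ρ ∧
            x = mutInfo (fun ss a => ∑ r, ρ r ss a) q' }
          ≤ mutInfo (fun ss a => ∑ r, ρ0 r ss a) q' :=
        csInf_le ⟨0, hlow⟩ ⟨ρ0, hρ0, rfl⟩
      exact h1.trans (mutInfo_le_card hρ0 hq')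
    exact le_csSup hbdd ⟨q, hqd, rfl⟩
  -- Step B : DP P belongs to the set
  have hqsum1 : ∑ a, qstar a = 1 := hq.2
  have hMle : (⨆ ss : Fin B → S,
      ∑ a, (qstar a / ∑ a', qstar a') *
        ⨆ r, Real.exp ((qstar a)⁻¹ * ∑ b, Bc r (ss b) a b)) ≤ 1 := by
    have hrw : ∀ ss : Fin B → S,
        (∑ a, (qstar a / ∑ a', qstar a') *
          ⨆ r, Real.exp ((qstar a)⁻¹ * ∑ b, Bc r (ss b) a b))
        = ∑ a, qstar a * ⨆ r, Real.exp (∑ b, lam r (ss b) a b) := by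
      intro ss
      refine Finset.sum_congr rfl fun a _ => ?_
      rw [hqsum1, div_one]
      congr 1
      refine iSup_congr fun r => ?_
      congr 1
      simp_rw [hBc]
      rw [← Finset.mul_sum, inv_mul_cancel_left₀ (hqpos a).ne']
    refine ciSup_le fun ss => ?_
    rw [hrw ss]
    exact hfeas ss
  have hMnn : (0:ℝ) ≤ ⨆ ss : Fin B → S,
      ∑ a, (qstar a / ∑ a', qstar a') *
        ⨆ r, Real.exp ((qstar a)⁻¹ * ∑ b, Bc r (ss b) a b) := by
    apply Real.iSup_nonneg
    intro ss
    refine Finset.sum_nonneg fun a _ => mul_nonneg ?_ ?_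
    · exact div_nonneg (hq.1 a) (by rw [hqsum1]; norm_num)
    · exact Real.iSup_nonneg fun r => (Real.exp_pos _).le
  have hvstar_mem : (ΔB + L) / (∑ a, qstar a)
      + (-Real.log (⨆ ss : Fin B → S,
          ∑ a, (qstar a / ∑ a', qstar a') *
            ⨆ r, Real.exp ((qstar a)⁻¹ * ∑ b, Bc r (ss b) a b)))
      ∈ { v : ℝ | ∃ η : Fin A → ℝ, (∀ a, 0 < η a) ∧
        v = (ΔB + L) / (∑ a, η a)
          + (-Real.log (⨆ ss : Fin B → S,
              ∑ a, (η a / ∑ a', η a') *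
                ⨆ r, Real.exp ((η a)⁻¹ * ∑ b, Bc r (ss b) a b))) } :=
    ⟨qstar, hqpos, rfl⟩
  have hvstar_ge : DP P ≤ (ΔB + L) / (∑ a, qstar a)
      + (-Real.log (⨆ ss : Fin B → S,
          ∑ a, (qstar a / ∑ a', qstar a') *
            ⨆ r, Real.exp ((qstar a)⁻¹ * ∑ b, Bc r (ss b) a b))) := by
    have hlog : Real.log (⨆ ss : Fin B → S,
        ∑ a, (qstar a / ∑ a', qstar a') *
          ⨆ r, Real.exp ((qstar a)⁻¹ * ∑ b, Bc r (ss b) a b)) ≤ 0 :=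
      Real.log_nonpos hMnn hMle
    have h1 : (ΔB + L) / (∑ a, qstar a) = DP P := by
      rw [hΔL, hTD, hqsum1, div_one]
    linarith [hlog, h1]
  have hvstar_eq : (ΔB + L) / (∑ a, qstar a)
      + (-Real.log (⨆ ss : Fin B → S,
          ∑ a, (qstar a / ∑ a', qstar a') *
            ⨆ r, Real.exp ((qstar a)⁻¹ * ∑ b, Bc r (ss b) a b))) = DP P :=
    le_antisymm (stepA _ hvstar_mem) hvstar_ge
  have hDmem : DP P ∈ { v : ℝ | ∃ η : Fin A → ℝ, (∀ a, 0 < η a) ∧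
        v = (ΔB + L) / (∑ a, η a)
          + (-Real.log (⨆ ss : Fin B → S,
              ∑ a, (η a / ∑ a', η a') *
                ⨆ r, Real.exp ((η a)⁻¹ * ∑ b, Bc r (ss b) a b))) } :=
    hvstar_eq ▸ hvstar_mem
  exact le_antisymm (csSup_le ⟨_, hDmem⟩ stepA)
    (le_csSup ⟨DP P, stepA⟩ hDmem)
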